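/- Let (G,·) be a group with identity e and let ⊙ be an associative binary operation on G making (G,·,e,⊙) an identical group-e-semigroup, i.e. e⊙(x·y) = e⊙(x⊙y) = x⊙y = (x·y)⊙e = (x⊙y)⊙e for all x,y ∈ G. Then: (i) (G,·,⊙) is a group-joined-semigroup: t⊙(x·y) = t⊙(x⊙y) and (x·y)⊙t = (x⊙y)⊙t for all t,x,y ∈ G (hence, by associativity of ⊙, t⊙(x·y) = (t⊙x)⊙y and (x·y)⊙t = x⊙(y⊙t)); (ii) e⊙e is central in (G,⊙): (e⊙e)⊙x = x⊙(e⊙e) for all x; (iii) e⊙e is the unique idempotent of (G,⊙): δ⊙δ = δ implies δ = e⊙e; (iv) for every x ∈ G there exists y ∈ G with x⊙y = y⊙x = e⊙e; (v) (G,⊙,e⊙e) is class united: (e⊙e)⊙(x⊙y) = x⊙y for all x,y. Hence (G,⊙) is a unipotent class united grouplike. -/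
import Mathlib


/-- Let `(G, ·)` be a group with identity `e = 1` and `⊙` an associative
operation making `(G, ·, e, ⊙)` an identical group-`e`-semigroup, i.e.
`e⊙(x·y) = e⊙(x⊙y) = x⊙y = (x·y)⊙e = (x⊙y)⊙e` for all `x, y`. Then:
(i) `(G, ·, ⊙)` is a group-joined-semigroup: `t⊙(x·y) = t⊙(x⊙y)` and
`(x·y)⊙t = (x⊙y)⊙t` for all `t, x, y`;
(ii) `e⊙e` is central in `(G, ⊙)`;
(iii) `e⊙e` is the unique idempotent of `(G, ⊙)`;
(iv) every `x` has a `y` with `x⊙y = y⊙x = e⊙e`;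
(v) `(G, ⊙, e⊙e)` is class united.
Hence `(G, ⊙)` is a unipotent class united grouplike. -/
theorem stmt_16 {G : Type*} [Group G] (op : G → G → G)
    (hassoc : ∀ x y z : G, op (op x y) z = op x (op y z))
    (h1 : ∀ x y : G, op 1 (x * y) = op 1 (op x y))
    (h2 : ∀ x y : G, op 1 (op x y) = op x y)
    (h3 : ∀ x y : G, op x y = op (x * y) 1)
    (h4 : ∀ x y : G, op (x * y) 1 = op (op x y) 1) :
    (∀ t x y : G, op t (x * y) = op t (op x y) ∧ op (x * y) t = op (op x y) t) ∧
    (∀ x : G, op (op 1 1) x = op x (op 1 1)) ∧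
    (op (op 1 1) (op 1 1) = op 1 1 ∧ ∀ δ : G, op δ δ = δ → δ = op 1 1) ∧
    (∀ x : G, ∃ y : G, op x y = op 1 1 ∧ op y x = op 1 1) ∧
    (∀ x y : G, op (op 1 1) (op x y) = op x y) := by
  -- φ z := op z 1 ; op x y = φ (x*y)
  -- φ is idempotent
  have hidem : ∀ z : G, op (op z 1) 1 = op z 1 := by
    intro z
    have h' := h3 1 (op z 1)
    rw [one_mul] at h'
    exact h'.symm.trans (h2 z 1)
  -- associativity in φ-form
  have hL2 : ∀ a b c : G, op (op (a * b) 1 * c) 1 = op (a * op (b * c) 1) 1 := by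
    intro a b c
    have h := hassoc a b c
    rw [h3 a b, h3 b c] at h
    rw [h3 (op (a * b) 1) c, h3 a (op (b * c) 1)] at h
    exact h
  -- φ (t*z) = φ (t * φ z)
  have hR : ∀ t z : G, op (t * z) 1 = op (t * op z 1) 1 := by
    intro t z
    have h := hL2 t z 1
    rw [mul_one, mul_one, hidem] at h
    exact h
  -- φ (x*t) = φ (φ x * t)
  have hL : ∀ x t : G, op (x * t) 1 = op (op x 1 * t) 1 := by
    intro x t
    have h := hL2 1 x t
    rw [one_mul, one_mul, hidem] at h
    exact h.symm
  refine ⟨?_, ?_, ⟨?_, ?_⟩, ?_, ?_⟩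
  · -- (i)
    intro t x y
    constructor
    · rw [h3 t (x * y), h3 t (op x y), h3 x y]
      exact hR t (x * y)
    · rw [h3 (x * y) t, h3 (op x y) t, h3 x y]
      exact hL (x * y) t
  · -- (ii): both sides equal φ x = op x 1
    intro x
    have e1 : op (op 1 1) x = op x 1 := by
      rw [h3 (op 1 1) x, ← hL 1 x, one_mul, h3 x 1, mul_one]
    have e2 : op x (op 1 1) = op x 1 := by
      rw [h3 x (op 1 1), ← hR x 1, mul_one, h3 x 1, mul_one]
    rw [e1, e2]
  · -- (iii) idempotency of ε
    rw [h3 (op 1 1) (op 1 1), ← hL 1 (op 1 1), one_mul, hidem]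
  · -- (iii) uniqueness
    intro δ hδ
    rw [h3 δ δ] at hδ
    -- hδ : op (δ*δ) 1 = δ
    have key := hL (δ * δ) δ⁻¹
    rw [hδ, mul_inv_cancel_right, mul_inv_cancel] at key
    -- key : op δ 1 = op 1 1 ... check direction
    rw [← hδ]
    -- goal : op (δ*δ) 1 = op 1 1
    -- from key : op (δ*δ*δ⁻¹) 1 -> op δ 1 = op (δ * δ⁻¹) 1 = op 1 1
    have hφδ : op δ 1 = δ := by
      have := hidem (δ * δ)
      rwa [hδ] at this
    calc op (δ * δ) 1 = δ := hδ
      _ = op δ 1 := hφδ.symm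
      _ = op 1 1 := key
  · -- (iv)
    intro x
    refine ⟨x⁻¹, ?_, ?_⟩
    · rw [h3 x x⁻¹, mul_inv_cancel, h3 1 1, mul_one]
    · rw [h3 x⁻¹ x, inv_mul_cancel, h3 1 1, mul_one]
  · -- (v)
    intro x y
    rw [h3 (op 1 1) (op x y), ← hL 1 (op x y), one_mul, h3 x y, hidem]
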